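/- Let p be a prime, (R, m) a differentiably simple local Noetherian commutative 𝔽_p-algebra, n := dim_{R/m}(m/m²) ≥ 1, and let δ_1, …, δ_n be pairwise commuting derivations of R and x_1, …, x_n ∈ m with δ_i^p = 0 and δ_i(x_j) = δ_{ij} for all i, j. For each i let φ_i := Σ_{k=0}^{p−1} (−1)^k (x_i^k/k!) δ_i^k : R → R, and let φ := φ_1 ∘ ⋯ ∘ φ_n. Then the image k' := φ(R) is a coefficient field of R, i.e., k' is a subfield of R with R = k' + m; moreover φ is the projection of R onto k' and k' = ∩_{i=1}^n ker δ_i. -/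

import Mathlib

/-- A derivation of a ring: an additive map satisfying the Leibniz rule. -/
def IsDerivation {R : Type*} [Ring R] (δ : R → R) : Prop :=
  (∀ a b : R, δ (a + b) = δ a + δ b) ∧ (∀ a b : R, δ (a * b) = δ a * b + a * δ b)

/-- A commutative ring is differentiably simple if `0` and `R` are its only
differential ideals. -/
def DiffSimple (R : Type*) [CommRing R] : Prop :=
  ∀ I : Ideal R, (∀ δ : R → R, IsDerivation δ → ∀ x ∈ I, δ x ∈ I) → I = ⊥ ∨ I = ⊤

/-- The composition `f 0 ∘ f 1 ∘ ⋯ ∘ f (n−1)` of a finite family of maps. -/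
def compFamily {R : Type*} : (n : ℕ) → (Fin n → R → R) → (R → R)
  | 0, _ => id
  | n + 1, f => f 0 ∘ compFamily n (fun i => f i.succ)

section Aux

variable {R : Type*} [CommRing R] {δ : R → R}

theorem auxDerZero (h : IsDerivation δ) : δ 0 = 0 := by
  have h0 := h.1 0 0
  rw [add_zero] at h0
  exact (left_eq_add.mp h0)

theorem auxDerOne (h : IsDerivation δ) : δ 1 = 0 := by
  have h0 := h.2 1 1
  simp only [mul_one, one_mul] at h0
  exact (left_eq_add.mp h0)

theorem auxDerNat (h : IsDerivation δ) (k : ℕ) : δ ((k : ℕ) : R) = 0 := by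
  induction k with
  | zero => simpa using auxDerZero h
  | succ l ih =>
    push_cast
    rw [h.1, ih, auxDerOne h, add_zero]

theorem auxDerNeg (h : IsDerivation δ) (a : R) : δ (-a) = -δ a := by
  have h0 := h.1 a (-a)
  rw [add_neg_cancel, auxDerZero h] at h0
  exact eq_neg_of_add_eq_zero_right h0.symm

theorem auxDerNegOnePow (h : IsDerivation δ) (k : ℕ) : δ ((-1 : R) ^ k) = 0 := by
  rcases Nat.even_or_odd k with he | ho
  · rw [he.neg_one_pow, auxDerOne h]
  · rw [ho.neg_one_pow, auxDerNeg h, auxDerOne h, neg_zero]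

theorem auxIterZero (h : IsDerivation δ) (k : ℕ) : δ^[k] (0 : R) = 0 := by
  induction k with
  | zero => rfl
  | succ l ih => rw [Function.iterate_succ_apply, auxDerZero h, ih]

theorem auxIterAdd (h : IsDerivation δ) (k : ℕ) (a b : R) :
    δ^[k] (a + b) = δ^[k] a + δ^[k] b := by
  induction k generalizing a b with
  | zero => rfl
  | succ l ih => rw [Function.iterate_succ_apply, h.1, ih,
      Function.iterate_succ_apply, Function.iterate_succ_apply]

theorem auxDerPow (h : IsDerivation δ) (a : R) (k : ℕ) :
    δ (a ^ (k + 1)) = ((k + 1 : ℕ) : R) * (a ^ k * δ a) := by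
  induction k with
  | zero => simp
  | succ l ih =>
    rw [pow_succ, h.2, ih]
    push_cast
    ring

theorem addMap_sum (F : R → R) (h0 : F 0 = 0) (hadd : ∀ a b : R, F (a + b) = F a + F b)
    {ι : Type*} (s : Finset ι) (f : ι → R) :
    F (∑ i ∈ s, f i) = ∑ i ∈ s, F (f i) := by
  classical
  induction s using Finset.induction_on with
  | empty => simpa
  | insert _ _ hx ih => rw [Finset.sum_insert hx, hadd, ih, Finset.sum_insert hx]

theorem auxDerSum (h : IsDerivation δ) {ι : Type*} (s : Finset ι) (f : ι → R) :
    δ (∑ i ∈ s, f i) = ∑ i ∈ s, δ (f i) :=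
  addMap_sum δ (auxDerZero h) h.1 s f

theorem compFamily_succ (m : ℕ) (f : Fin (m + 1) → R → R) :
    compFamily (m + 1) f = f 0 ∘ compFamily m (fun i => f i.succ) := rfl

theorem compFamily_add :
    ∀ (m : ℕ) (f : Fin m → R → R), (∀ j (a b : R), f j (a + b) = f j a + f j b) →
      ∀ a b : R, compFamily m f (a + b) = compFamily m f a + compFamily m f b := by
  intro m
  induction m with
  | zero => intro f h a b; rfl
  | succ m ih =>
    intro f h a b
    rw [compFamily_succ, Function.comp_apply, Function.comp_apply, Function.comp_apply,
      ih (fun i => f i.succ) (fun j => h j.succ) a b, h 0]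

theorem compFamily_fix :
    ∀ (m : ℕ) (f : Fin m → R → R) (a : R), (∀ j, f j a = a) → compFamily m f a = a := by
  intro m
  induction m with
  | zero => intro f a h; rfl
  | succ m ih =>
    intro f a h
    rw [compFamily_succ, Function.comp_apply, ih (fun i => f i.succ) a (fun j => h j.succ), h 0]

theorem compFamily_sub_mem :
    ∀ (m : ℕ) (f : Fin m → R → R) (I : Ideal R), (∀ j (r : R), f j r - r ∈ I) →
      ∀ r : R, compFamily m f r - r ∈ I := by
  intro m
  induction m with
  | zero =>
    intro f I h r
    show r - r ∈ I
    simpa using I.zero_mem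
  | succ m ih =>
    intro f I h r
    rw [compFamily_succ, Function.comp_apply]
    have e : f 0 (compFamily m (fun i => f i.succ) r) - r
        = (f 0 (compFamily m (fun i => f i.succ) r) - compFamily m (fun i => f i.succ) r)
          + (compFamily m (fun i => f i.succ) r - r) := by ring
    rw [e]
    exact add_mem (h 0 _) (ih (fun i => f i.succ) I (fun j => h j.succ) r)

theorem compFamily_push :
    ∀ (m : ℕ) (f : Fin m → R → R) (c : R), (∀ j (y : R), f j (c * y) = c * f j y) →
      ∀ y : R, compFamily m f (c * y) = c * compFamily m f y := by
  intro m
  induction m with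
  | zero => intro f c h y; rfl
  | succ m ih =>
    intro f c h y
    rw [compFamily_succ, Function.comp_apply, Function.comp_apply,
      ih (fun i => f i.succ) c (fun j => h j.succ) y, h 0]

theorem compFamily_ker :
    ∀ (m : ℕ) (f : Fin m → R → R) (d : R → R) (t : Fin m),
      (∀ y : R, d (f t y) = 0) →
      (∀ j, j ≠ t → ∀ y : R, d (f j y) = f j (d y)) →
      (∀ j, f j 0 = 0) →
      ∀ r : R, d (compFamily m f r) = 0 := by
  intro m
  induction m with
  | zero => intro f d t; exact t.elim0
  | succ m ih =>
    intro f d t h1 h2 h0 r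
    rw [compFamily_succ, Function.comp_apply]
    rcases eq_or_ne t 0 with rfl | ht
    · exact h1 _
    · obtain ⟨u, rfl⟩ : ∃ u : Fin m, t = u.succ := ⟨t.pred ht, (Fin.succ_pred t ht).symm⟩
      rw [h2 0 (Fin.succ_ne_zero u).symm _,
        ih (fun i => f i.succ) d u (fun y => h1 y)
          (fun j hj y => h2 j.succ (fun hh => hj (Fin.succ_injective _ hh)) y)
          (fun j => h0 j.succ) r]
      exact h0 0

theorem compFamily_kill :
    ∀ (m : ℕ) (f : Fin m → R → R) (c : R) (t : Fin m),
      (∀ y : R, f t (c * y) = 0) →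
      (∀ s, t < s → ∀ y : R, f s (c * y) = c * f s y) →
      (∀ j, f j 0 = 0) →
      ∀ y : R, compFamily m f (c * y) = 0 := by
  intro m
  induction m with
  | zero => intro f c t; exact t.elim0
  | succ m ih =>
    intro f c t h1 h2 h0 y
    rw [compFamily_succ, Function.comp_apply]
    rcases eq_or_ne t 0 with rfl | ht
    · rw [compFamily_push m (fun i => f i.succ) c
        (fun j y' => h2 j.succ (Fin.succ_pos j) y') y]
      exact h1 _
    · obtain ⟨u, rfl⟩ : ∃ u : Fin m, t = u.succ := ⟨t.pred ht, (Fin.succ_pred t ht).symm⟩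
      rw [ih (fun i => f i.succ) c u (fun y' => h1 y')
        (fun s hs y' => h2 s.succ (Fin.succ_lt_succ_iff.mpr hs) y') (fun j => h0 j.succ) y]
      exact h0 0

end Aux

open IsLocalRing in
theorem stmt8 {R : Type*} [CommRing R] [IsLocalRing R] [IsNoetherianRing R]
    (p : ℕ) (hp : p.Prime) [CharP R p] (hds : DiffSimple R)
    (n : ℕ) (hn : 1 ≤ n)
    (hdim : Module.finrank (ResidueField R) (CotangentSpace R) = n)
    (δ : Fin n → R → R) (hδ : ∀ i, IsDerivation (δ i))
    (hcomm : ∀ i j, δ i ∘ δ j = δ j ∘ δ i)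
    (hδp : ∀ i, ∀ r : R, (δ i)^[p] r = 0)
    (x : Fin n → R) (hx : ∀ j, x j ∈ maximalIdeal R)
    (hδx : ∀ i j, δ i (x j) = if i = j then (1 : R) else 0)
    -- the inverse of `k!` in `𝔽_p`, transported to `R`
    (finv : ℕ → R) (hfinv : ∀ k : ℕ, finv k =
      ZMod.castHom (dvd_refl p) R ((k.factorial : ZMod p)⁻¹))
    -- `φ_i := Σ_{k=0}^{p−1} (−1)^k (x_i^k/k!) δ_i^k`
    (φi : Fin n → R → R) (hφi : ∀ i, ∀ r : R, φi i r =
      ∑ k ∈ Finset.range p, (-1 : R) ^ k * finv k * (x i) ^ k * (δ i)^[k] r)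
    -- `φ := φ_1 ∘ ⋯ ∘ φ_n`
    (φ : R → R) (hφ : φ = compFamily n φi) :
    -- `k' := φ(R)` is a coefficient field of `R`
    (∃ K : Subring R, (K : Set R) = Set.range φ ∧ IsField K ∧
      ∀ r : R, ∃ a ∈ K, ∃ b ∈ maximalIdeal R, r = a + b) ∧
    -- `φ` is the projection of `R` onto `k'` along `m`
    (∀ a b : R, a ∈ Set.range φ → b ∈ maximalIdeal R → φ (a + b) = a) ∧
    -- `k' = ∩_{i=1}^n ker δ_i`
    Set.range φ = {a : R | ∀ i, δ i a = 0} := by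
  classical
  haveI hfp : Fact p.Prime := ⟨hp⟩
  haveI : NeZero p := ⟨hp.ne_zero⟩
  obtain ⟨q, hq⟩ : ∃ q : ℕ, p = q + 1 := ⟨p - 1, by have := hp.pos; omega⟩
  -- basic facts about constants
  have hfinv0 : finv 0 = 1 := by rw [hfinv]; simp
  have hdfinv : ∀ (i : Fin n) (k : ℕ), δ i (finv k) = 0 := by
    intro i k
    rw [hfinv, ZMod.castHom_apply, ← ZMod.natCast_val]
    exact auxDerNat (hδ i) _
  have hconst : ∀ (i : Fin n) (k : ℕ), δ i ((-1 : R) ^ k * finv k) = 0 := by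
    intro i k
    rw [(hδ i).2, auxDerNegOnePow (hδ i), hdfinv i k, zero_mul, mul_zero, add_zero]
  have hsmul : ∀ (i : Fin n) (c w : R), δ i c = 0 → δ i (c * w) = c * δ i w := by
    intro i c w hc
    rw [(hδ i).2, hc, zero_mul, zero_add]
  have hfact : ∀ k : ℕ, k + 1 < p → finv (k + 1) * ((k + 1 : ℕ) : R) = finv k := by
    intro k hk
    rw [hfinv, hfinv]
    have e : ((k + 1 : ℕ) : R) = ZMod.castHom (dvd_refl p) R ((k + 1 : ℕ) : ZMod p) := by
      rw [map_natCast]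
    rw [e, ← map_mul]
    congr 1
    have h1 : ((k + 1 : ℕ) : ZMod p) ≠ 0 := by
      rw [Ne, ZMod.natCast_eq_zero_iff]
      intro hd
      have := Nat.le_of_dvd (Nat.succ_pos k) hd
      omega
    rw [Nat.factorial_succ]
    push_cast
    push_cast at h1
    rw [mul_inv_rev, mul_assoc, inv_mul_cancel₀ h1, mul_one]
  -- pointwise facts about φi
  have Fadd : ∀ (i : Fin n) (a b : R), φi i (a + b) = φi i a + φi i b := by
    intro i a b
    rw [hφi, hφi, hφi, ← Finset.sum_add_distrib]
    exact Finset.sum_congr rfl fun k _ => by rw [auxIterAdd (hδ i), mul_add]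
  have Ffix : ∀ (i : Fin n) (a : R), δ i a = 0 → φi i a = a := by
    intro i a ha
    rw [hφi]
    rw [Finset.sum_eq_single 0]
    · simp [hfinv0]
    · intro k _ hk0
      obtain ⟨j, rfl⟩ := Nat.exists_eq_succ_of_ne_zero hk0
      rw [Function.iterate_succ_apply, ha, auxIterZero (hδ i), mul_zero]
    · intro h0
      exact absurd (Finset.mem_range.mpr hp.pos) h0
  have hφi0 : ∀ i : Fin n, φi i 0 = 0 := fun i => Ffix i 0 (auxDerZero (hδ i))
  have Fsub : ∀ (i : Fin n) (r : R), φi i r - r ∈ maximalIdeal R := by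
    intro i r
    rw [hφi, hq, Finset.sum_range_succ']
    have hT0 : (-1 : R) ^ 0 * finv 0 * x i ^ 0 * (δ i)^[0] r = r := by simp [hfinv0]
    rw [hT0, add_sub_cancel_right]
    refine Ideal.sum_mem _ fun k _ => ?_
    have e : (-1 : R) ^ (k + 1) * finv (k + 1) * x i ^ (k + 1) * (δ i)^[k + 1] r
        = x i * ((-1 : R) ^ (k + 1) * finv (k + 1) * x i ^ k * (δ i)^[k + 1] r) := by ring
    rw [e]
    exact Ideal.mul_mem_right _ _ (hx i)
  have Fder : ∀ (i : Fin n) (r : R), δ i (φi i r) = 0 := by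
    intro i r
    have hxi1 : δ i (x i) = 1 := by rw [hδx]; simp
    set U : ℕ → R := fun k =>
      ((-1 : R) ^ k * finv k * ((k : ℕ) : R)) * (x i ^ (k - 1) * (δ i)^[k] r) with hU
    have hsplit : ∀ k, δ i ((-1 : R) ^ k * finv k * x i ^ k * (δ i)^[k] r)
        = U k + ((-1 : R) ^ k * finv k) * (x i ^ k * (δ i)^[k + 1] r) := by
      intro k
      have e1 : (-1 : R) ^ k * finv k * x i ^ k * (δ i)^[k] r
          = ((-1 : R) ^ k * finv k) * (x i ^ k * (δ i)^[k] r) := by ring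
      rw [e1, hsmul i _ _ (hconst i k), (hδ i).2, ← Function.iterate_succ_apply' (δ i) k r]
      cases k with
      | zero => simp [hU, auxDerOne (hδ i)]
      | succ l =>
        rw [auxDerPow (hδ i) (x i) l, hxi1]
        simp only [hU, Nat.add_sub_cancel]
        ring
    have hVU : ∀ k, k < p → ((-1 : R) ^ k * finv k) * (x i ^ k * (δ i)^[k + 1] r)
        = - U (k + 1) := by
      intro k hk
      rcases eq_or_lt_of_le (Nat.succ_le_of_lt hk) with he | hlt
      · have he' : k + 1 = p := he
        have h0 : (δ i)^[k + 1] r = 0 := by rw [he']; exact hδp i r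
        simp [hU, h0]
      · simp only [hU, Nat.add_sub_cancel]
        linear_combination ((-1 : R) ^ (k + 1) * (x i ^ k * (δ i)^[k + 1] r)) * (hfact k hlt)
    rw [hφi, auxDerSum (hδ i)]
    have hterm : ∀ k ∈ Finset.range p,
        δ i ((-1 : R) ^ k * finv k * x i ^ k * (δ i)^[k] r) = U k - U (k + 1) := by
      intro k hk
      rw [hsplit k, hVU k (Finset.mem_range.mp hk)]
      ring
    rw [Finset.sum_congr rfl hterm, Finset.sum_range_sub']
    have hU0 : U 0 = 0 := by simp [hU]
    have hUp : U p = 0 := by simp [hU, CharP.cast_eq_zero]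
    rw [hU0, hUp, sub_zero]
  have Fcomm : ∀ (i j : Fin n), j ≠ i → ∀ y : R, δ i (φi j y) = φi j (δ i y) := by
    intro i j hji y
    have hcij : ∀ (k : ℕ) (z : R), δ i ((δ j)^[k] z) = (δ j)^[k] (δ i z) := by
      intro k z
      have hc : Function.Commute (δ i) (δ j) := fun a => congrFun (hcomm i j) a
      exact (hc.iterate_right k) z
    have hxjk : ∀ k : ℕ, δ i (x j ^ k) = 0 := by
      intro k
      cases k with
      | zero => simpa using auxDerOne (hδ i)
      | succ l =>
        rw [auxDerPow (hδ i) (x j) l, hδx i j, if_neg (Ne.symm hji), mul_zero, mul_zero]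
    rw [hφi, hφi, auxDerSum (hδ i)]
    refine Finset.sum_congr rfl fun k _ => ?_
    have e1 : (-1 : R) ^ k * finv k * x j ^ k * (δ j)^[k] y
        = ((-1 : R) ^ k * finv k) * (x j ^ k * (δ j)^[k] y) := by ring
    rw [e1, hsmul i _ _ (hconst i k), (hδ i).2, hxjk, hcij, zero_mul, zero_add]
    ring
  have Fpush : ∀ (i s : Fin n), s ≠ i → ∀ y : R, φi s (x i * y) = x i * φi s y := by
    intro i s hsi y
    have hit : ∀ (k : ℕ) (z : R), (δ s)^[k] (x i * z) = x i * (δ s)^[k] z := by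
      intro k
      induction k with
      | zero => intro z; rfl
      | succ l ih =>
        intro z
        rw [Function.iterate_succ_apply, (hδ s).2, hδx s i, if_neg hsi, zero_mul, zero_add,
          ih, Function.iterate_succ_apply]
    rw [hφi, hφi, Finset.mul_sum]
    exact Finset.sum_congr rfl fun k _ => by rw [hit]; ring
  -- the elements x i ^ p generate a differential ideal, hence vanish
  have hxp : ∀ i : Fin n, x i ^ p = 0 := by
    have hdiff : ∀ δ' : R → R, IsDerivation δ' →
        ∀ r ∈ Ideal.span (Set.range fun i => x i ^ p),
          δ' r ∈ Ideal.span (Set.range fun i => x i ^ p) := by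
      intro δ' hδ' r hr
      induction hr using Submodule.span_induction with
      | mem y hy =>
        obtain ⟨i, rfl⟩ := hy
        rw [hq, auxDerPow hδ' (x i) q]
        have hp0 : ((q + 1 : ℕ) : R) = 0 := by
          rw [← hq]
          exact CharP.cast_eq_zero R p
        rw [hp0, zero_mul]
        exact Ideal.zero_mem _
      | zero =>
        rw [auxDerZero hδ']
        exact Ideal.zero_mem _
      | add a b ha hb iha ihb =>
        rw [hδ'.1]
        exact Ideal.add_mem _ iha ihb
      | smul c y hy ihy =>
        rw [smul_eq_mul, hδ'.2]
        exact Ideal.add_mem _ (Ideal.mul_mem_left _ _ hy)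
          (Ideal.mul_mem_left _ _ ihy)
    rcases hds _ hdiff with h0 | h1
    · intro i
      have hmem : x i ^ p ∈ Ideal.span (Set.range fun i => x i ^ p) :=
        Ideal.subset_span ⟨i, rfl⟩
      rw [h0] at hmem
      simpa using hmem
    · exfalso
      have hle : Ideal.span (Set.range fun i => x i ^ p) ≤ maximalIdeal R := by
        rw [Ideal.span_le]
        rintro _ ⟨i, rfl⟩
        exact Ideal.pow_mem_of_mem _ (hx i) p hp.pos
      rw [h1] at hle
      exact (maximalIdeal.isMaximal R).ne_top (top_le_iff.mp hle)
  have Fkill : ∀ (i : Fin n) (y : R), φi i (x i * y) = 0 := by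
    intro i y
    have hxi1 : δ i (x i) = 1 := by rw [hδx]; simp
    have hit : ∀ k : ℕ, (δ i)^[k + 1] (x i * y)
        = x i * (δ i)^[k + 1] y + ((k + 1 : ℕ) : R) * (δ i)^[k] y := by
      intro k
      induction k with
      | zero =>
        show (δ i)^[1] (x i * y) = x i * (δ i)^[1] y + ((0 + 1 : ℕ) : R) * (δ i)^[0] y
        simp only [Function.iterate_one, Function.iterate_zero_apply]
        rw [(hδ i).2, hxi1]
        push_cast
        ring
      | succ l ih =>
        rw [Function.iterate_succ_apply' (δ i) (l + 1) (x i * y), ih, (hδ i).1,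
          (hδ i).2, (hδ i).2, hxi1, auxDerNat (hδ i) (l + 1),
          ← Function.iterate_succ_apply' (δ i) (l + 1) y,
          ← Function.iterate_succ_apply' (δ i) l y]
        push_cast
        ring
    set A : ℕ → R := fun k => ((-1 : R) ^ k * finv k) * (x i ^ (k + 1) * (δ i)^[k] y) with hA
    have hstep : ∀ k ∈ Finset.range q,
        (-1 : R) ^ (k + 1) * finv (k + 1) * x i ^ (k + 1) * (δ i)^[k + 1] (x i * y)
          = A (k + 1) - A k := by
      intro k hk
      have hk1 : k + 1 < p := by
        have := Finset.mem_range.mp hk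
        omega
      rw [hit k]
      simp only [hA]
      linear_combination ((-1 : R) ^ (k + 1) * (x i ^ (k + 1) * (δ i)^[k] y)) * (hfact k hk1)
    rw [hφi, hq, Finset.sum_range_succ']
    rw [Finset.sum_congr rfl hstep, Finset.sum_range_sub]
    have hAq : A q = 0 := by
      have hx0 : x i ^ (q + 1) = 0 := by rw [← hq]; exact hxp i
      simp [hA, hx0]
    have hA0 : A 0 = x i * y := by simp [hA, hfinv0]
    have hT0 : (-1 : R) ^ 0 * finv 0 * x i ^ 0 * (δ i)^[0] (x i * y) = x i * y := by
      simp [hfinv0]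
    rw [hAq, hA0, hT0]
    ring
  -- global facts about φ
  have hφadd : ∀ a b : R, φ (a + b) = φ a + φ b := by
    intro a b
    rw [hφ]
    exact compFamily_add n φi Fadd a b
  have hφfix : ∀ a : R, (∀ i, δ i a = 0) → φ a = a := by
    intro a ha
    rw [hφ]
    exact compFamily_fix n φi a (fun j => Ffix j a (ha j))
  have hφ0 : φ 0 = 0 := by
    rw [hφ]
    exact compFamily_fix n φi 0 (fun j => hφi0 j)
  have hφK : ∀ (r : R) (i : Fin n), δ i (φ r) = 0 := by
    intro r i
    rw [hφ]
    exact compFamily_ker n φi (δ i) i (Fder i) (fun j hj y => Fcomm i j hj y) hφi0 r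
  have hφsub : ∀ r : R, φ r - r ∈ maximalIdeal R := by
    intro r
    rw [hφ]
    exact compFamily_sub_mem n φi _ Fsub r
  have hkill : ∀ (i : Fin n) (u : R), φ (x i * u) = 0 := by
    intro i u
    rw [hφ]
    exact compFamily_kill n φi (x i) i (fun y => Fkill i y)
      (fun s hs y => Fpush i s hs.ne' y) hφi0 u
  -- the maximal ideal is spanned by the x i
  have hspan : ∀ b ∈ maximalIdeal R, ∃ u : Fin n → R, b = ∑ i, u i * x i := by
    haveI : Nonempty (Fin n) := ⟨⟨0, hn⟩⟩
    set v : Fin n → (maximalIdeal R) := fun i => ⟨x i, hx i⟩ with hv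
    have hm2 : ∀ z ∈ maximalIdeal R * maximalIdeal R, ∀ j, δ j z ∈ maximalIdeal R := by
      intro z hz j
      refine Submodule.mul_induction_on hz ?_ ?_
      · intro a ha b hb
        rw [(hδ j).2]
        exact add_mem (Ideal.mul_mem_left _ _ hb) (Ideal.mul_mem_right _ _ ha)
      · intro a b ha hb
        rw [(hδ j).1]
        exact add_mem ha hb
    have hli : LinearIndependent (ResidueField R)
        (fun i => (maximalIdeal R).toCotangent (v i)) := by
      rw [Fintype.linearIndependent_iff]
      intro g hg
      obtain ⟨c, hc⟩ : ∃ c : Fin n → R, ∀ i, residue R (c i) = g i := by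
        choose c hc using fun i => IsLocalRing.residue_surjective (g i)
        exact ⟨c, hc⟩
      have h1 : (maximalIdeal R).toCotangent (∑ i, c i • v i) = 0 := by
        rw [map_sum, ← hg]
        refine Finset.sum_congr rfl fun i _ => ?_
        rw [map_smul, ← hc i, ← IsLocalRing.ResidueField.algebraMap_eq,
          algebraMap_smul]
      have h2 : (∑ i, c i * x i) ∈ maximalIdeal R ^ 2 := by
        have h2' := ((maximalIdeal R).toCotangent_eq_zero _).mp h1
        have e : ((∑ i, c i • v i : maximalIdeal R) : R) = ∑ i, c i * x i := by
          push_cast [hv]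
          rfl
        rwa [e] at h2'
      have hcm : ∀ j, c j ∈ maximalIdeal R := by
        intro j
        have h3 : δ j (∑ i, c i * x i) ∈ maximalIdeal R := by
          refine hm2 _ ?_ j
          rwa [← pow_two]
        have h4 : δ j (∑ i, c i * x i) = (∑ i, δ j (c i) * x i) + c j := by
          rw [auxDerSum (hδ j),
            Finset.sum_congr rfl (fun i _ => (hδ j).2 (c i) (x i)),
            Finset.sum_add_distrib]
          congr 1
          rw [Finset.sum_congr rfl (fun i (_ : i ∈ Finset.univ) => by rw [hδx j i])]
          simp
        have e : c j = δ j (∑ i, c i * x i) - ∑ i, δ j (c i) * x i := by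
          rw [h4]; ring
        rw [e]
        exact sub_mem h3 (Ideal.sum_mem _ fun i _ => Ideal.mul_mem_left _ _ (hx i))
      intro j
      rw [← hc j, IsLocalRing.residue_eq_zero_iff]
      exact hcm j
    have hcard : Fintype.card (Fin n)
        = Module.finrank (ResidueField R) (CotangentSpace R) := by
      simp [hdim]
    have hsp : Submodule.span (ResidueField R)
        (Set.range fun i => (maximalIdeal R).toCotangent (v i)) = ⊤ :=
      hli.span_eq_top_of_card_eq_finrank hcard
    have hsp2 : Submodule.span R (Set.range v) = ⊤ := by
      rw [← IsLocalRing.CotangentSpace.span_image_eq_top_iff, ← Set.range_comp]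
      exact hsp
    intro b hb
    have hmem : (⟨b, hb⟩ : maximalIdeal R) ∈ Submodule.span R (Set.range v) := by
      rw [hsp2]; exact Submodule.mem_top
    rw [Submodule.mem_span_range_iff_exists_fun] at hmem
    obtain ⟨u, hu⟩ := hmem
    refine ⟨u, ?_⟩
    have := congrArg (Subtype.val) hu
    push_cast [hv] at this
    exact this.symm
  -- the kernel intersected with the maximal ideal is zero
  have hKm : ∀ c : R, (∀ i, δ i c = 0) → c ∈ maximalIdeal R → c = 0 := by
    intro c hc hcm
    obtain ⟨u, hu⟩ := hspan c hcm
    have h1 : φ c = c := hφfix c hc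
    have h2 : φ c = 0 := by
      rw [hu, addMap_sum φ hφ0 hφadd]
      refine Finset.sum_eq_zero fun i _ => ?_
      rw [mul_comm]
      exact hkill i (u i)
    rw [← h1, h2]
  -- the subring of "constants"
  let K : Subring R :=
    { carrier := {a : R | ∀ i, δ i a = 0}
      zero_mem' := fun i => auxDerZero (hδ i)
      one_mem' := fun i => auxDerOne (hδ i)
      add_mem' := fun {a b} ha hb i => by rw [(hδ i).1, ha i, hb i, add_zero]
      mul_mem' := fun {a b} ha hb i => by rw [(hδ i).2, ha i, hb i, zero_mul, mul_zero, add_zero]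
      neg_mem' := fun {a} ha i => by rw [auxDerNeg (hδ i), ha i, neg_zero] }
  have hKmem : ∀ a : R, a ∈ K ↔ ∀ i, δ i a = 0 := fun a => Iff.rfl
  have hrange : (K : Set R) = Set.range φ := by
    ext a
    constructor
    · intro haK
      exact ⟨a, hφfix a haK⟩
    · rintro ⟨r, rfl⟩ i
      exact hφK r i
  refine ⟨⟨K, hrange, ?_, ?_⟩, ?_, ?_⟩
  · -- IsField K
    refine ⟨⟨0, 1, fun h => zero_ne_one (congrArg Subtype.val h)⟩, mul_comm, ?_⟩
    intro a ha
    have hnm : (a : R) ∉ maximalIdeal R := by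
      intro hm
      exact ha (Subtype.ext (hKm a a.2 hm))
    have hu : IsUnit (a : R) := by
      by_contra h
      exact hnm ((IsLocalRing.mem_maximalIdeal _).mpr h)
    obtain ⟨b, hb⟩ := hu.exists_right_inv
    have hbK : ∀ i, δ i b = 0 := by
      intro i
      have h1 : (a : R) * δ i b = 0 := by
        have h2 := congrArg (δ i) hb
        rw [(hδ i).2, a.2 i, auxDerOne (hδ i), zero_mul, zero_add] at h2
        exact h2
      calc δ i b = (b * (a : R)) * δ i b := by rw [mul_comm b, hb, one_mul]
        _ = b * ((a : R) * δ i b) := by ring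
        _ = 0 := by rw [h1, mul_zero]
    exact ⟨⟨b, hbK⟩, Subtype.ext hb⟩
  · -- coefficient field decomposition
    intro r
    refine ⟨φ r, fun i => hφK r i, r - φ r, ?_, by ring⟩
    have := hφsub r
    have e : r - φ r = -(φ r - r) := by ring
    rw [e]
    exact neg_mem this
  · -- projection property
    rintro a b ⟨r, rfl⟩ hbm
    have haK : ∀ i, δ i (φ r) = 0 := fun i => hφK r i
    rw [hφadd]
    have hφb : φ b = 0 := by
      refine hKm (φ b) (fun i => hφK b i) ?_
      have e : φ b = (φ b - b) + b := by ring
      rw [e]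
      exact add_mem (hφsub b) hbm
    rw [hφb, add_zero]
    exact hφfix (φ r) haK
  · -- range φ = intersection of kernels
    rw [← hrange]
    rfl
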